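/- Let Ψ satisfy Ψ'(x) = exp(−3 Ψ(x)²) with Ψ(0) = 0, fix σ > 0 with σ ≤ 1/100, define q_i = Ψ'(iσ) and π_i = σ + Σ_{j=0}^{i−1} σ q_j. Then for every i ≥ 0 and k ∈ {1,2}, q_i · π_i^k ≤ 1. -/

import Mathlib

open Real Finset

theorem stmt_5 (Ψ : ℝ → ℝ) (σ : ℝ) (hσ : 0 < σ) (hσ' : σ ≤ 1 / 100)
    (hΨ : ∀ x : ℝ, 0 ≤ x → HasDerivAt Ψ (Real.exp (-3 * Ψ x ^ 2)) x)
    (hΨ0 : Ψ 0 = 0)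
    (q : ℕ → ℝ) (hq : ∀ j : ℕ, q j = deriv Ψ (j * σ))
    (Pi : ℕ → ℝ) (hPi : ∀ i : ℕ, Pi i = σ + ∑ j ∈ Finset.range i, σ * q j) :
    ∀ i : ℕ, ∀ k : ℕ, k = 1 ∨ k = 2 → q i * Pi i ^ k ≤ 1 := by
  have hcont : ContinuousOn Ψ (Set.Ici 0) := fun x hx =>
    ((hΨ x hx).continuousAt).continuousWithinAt
  have hderiv : ∀ x : ℝ, 0 ≤ x → deriv Ψ x = Real.exp (-3 * Ψ x ^ 2) :=
    fun x hx => (hΨ x hx).deriv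
  have hmono : StrictMonoOn Ψ (Set.Ici 0) := by
    apply strictMonoOn_of_deriv_pos (convex_Ici 0) hcont
    intro x hx
    rw [interior_Ici] at hx
    rw [hderiv x hx.le]
    exact Real.exp_pos _
  have hnonneg : ∀ x : ℝ, 0 ≤ x → 0 ≤ Ψ x := by
    intro x hx
    rcases eq_or_lt_of_le hx with h | h
    · rw [← h, hΨ0]
    · have := hmono Set.self_mem_Ici (Set.mem_Ici.2 hx) h
      rw [hΨ0] at this; exact this.le
  have hanti : ∀ a b : ℝ, 0 ≤ a → a ≤ b →
      Real.exp (-3 * Ψ b ^ 2) ≤ Real.exp (-3 * Ψ a ^ 2) := by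
    intro a b ha hab
    apply Real.exp_le_exp.2
    have h1 : 0 ≤ Ψ a := hnonneg a ha
    have h2 : Ψ a ≤ Ψ b := hmono.monotoneOn (Set.mem_Ici.2 ha)
      (Set.mem_Ici.2 (ha.trans hab)) hab
    nlinarith
  have step_up : ∀ a b : ℝ, 0 ≤ a → a ≤ b →
      Ψ b - Ψ a ≤ (b - a) * Real.exp (-3 * Ψ a ^ 2) := by
    intro a b ha hab
    set c := Real.exp (-3 * Ψ a ^ 2) with hc
    have key : MonotoneOn (fun x => c * x - Ψ x) (Set.Icc a b) := by
      apply monotoneOn_of_deriv_nonneg (convex_Icc a b)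
      · intro x hx
        exact (((hasDerivAt_id x).const_mul c).sub
          (hΨ x (ha.trans hx.1))).continuousAt.continuousWithinAt
      · intro x hx
        rw [interior_Icc] at hx
        exact (((hasDerivAt_id x).const_mul c).sub
          (hΨ x (ha.trans hx.1.le))).differentiableAt.differentiableWithinAt
      · intro x hx
        rw [interior_Icc] at hx
        have hd := (((hasDerivAt_id x).const_mul c).sub
          (hΨ x (ha.trans hx.1.le))).deriv
        simp only [id_eq] at hd
        rw [show (fun x => c * x - Ψ x) = (fun y => c * y) - Ψ from rfl, hd]
        have := hanti a x ha hx.1.le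
        rw [← hc] at this
        simp only [mul_one]
        linarith
    have h2 := key (Set.left_mem_Icc.2 hab) (Set.right_mem_Icc.2 hab) hab
    simp only at h2
    nlinarith
  have step_down : ∀ a b : ℝ, 0 ≤ a → a ≤ b →
      (b - a) * Real.exp (-3 * Ψ b ^ 2) ≤ Ψ b - Ψ a := by
    intro a b ha hab
    set c := Real.exp (-3 * Ψ b ^ 2) with hc
    have key : AntitoneOn (fun x => c * x - Ψ x) (Set.Icc a b) := by
      apply antitoneOn_of_deriv_nonpos (convex_Icc a b)
      · intro x hx
        exact (((hasDerivAt_id x).const_mul c).sub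
          (hΨ x (ha.trans hx.1))).continuousAt.continuousWithinAt
      · intro x hx
        rw [interior_Icc] at hx
        exact (((hasDerivAt_id x).const_mul c).sub
          (hΨ x (ha.trans hx.1.le))).differentiableAt.differentiableWithinAt
      · intro x hx
        rw [interior_Icc] at hx
        have hd := (((hasDerivAt_id x).const_mul c).sub
          (hΨ x (ha.trans hx.1.le))).deriv
        simp only [id_eq] at hd
        rw [show (fun x => c * x - Ψ x) = (fun y => c * y) - Ψ from rfl, hd]
        have := hanti x b (ha.trans hx.1.le) hx.2.le
        rw [← hc] at this
        simp only [mul_one]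
        linarith
    have h2 := key (Set.left_mem_Icc.2 hab) (Set.right_mem_Icc.2 hab) hab
    simp only at h2
    nlinarith
  have hqval : ∀ j : ℕ, q j = Real.exp (-3 * Ψ (j * σ) ^ 2) := by
    intro j
    rw [hq j, hderiv _ (by positivity)]
  have hqpos : ∀ j : ℕ, 0 < q j := fun j => (hqval j) ▸ Real.exp_pos _
  -- lower bound on sum: Ψ (iσ) ≤ ∑
  have sum_lb : ∀ i : ℕ, Ψ (i * σ) ≤ ∑ j ∈ Finset.range i, σ * q j := by
    intro i
    induction i with
    | zero => simp [hΨ0]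
    | succ n ih =>
      rw [Finset.sum_range_succ]
      have h1 := step_up (n * σ) ((n + 1 : ℕ) * σ) (by positivity)
        (by push_cast; nlinarith)
      rw [← hqval n] at h1
      have : ((n + 1 : ℕ) : ℝ) * σ - n * σ = σ := by push_cast; ring
      rw [this] at h1
      push_cast at h1 ⊢
      linarith
  -- upper bound on sum: ∑ ≤ σ + Ψ (iσ)
  have sum_ub : ∀ i : ℕ, ∑ j ∈ Finset.range i, σ * q j ≤ σ + Ψ (i * σ) := by
    intro i
    cases i with
    | zero => simp [hΨ0]; positivity
    | succ n =>
      rw [Finset.sum_range_succ']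
      have hq0 : q 0 = 1 := by
        rw [hqval 0]; norm_num [hΨ0]
      have hsum : ∑ j ∈ Finset.range n, σ * q (j + 1) ≤
          ∑ j ∈ Finset.range n, (Ψ ((j + 1 : ℕ) * σ) - Ψ (j * σ)) := by
        apply Finset.sum_le_sum
        intro j _
        have h1 := step_down (j * σ) ((j + 1 : ℕ) * σ) (by positivity)
          (by push_cast; nlinarith)
        rw [← hqval (j + 1)] at h1
        have : ((j + 1 : ℕ) : ℝ) * σ - j * σ = σ := by push_cast; ring
        rw [this] at h1
        exact h1
      have htel : ∑ j ∈ Finset.range n, (Ψ ((j + 1 : ℕ) * σ) - Ψ (j * σ))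
          = Ψ (n * σ) - Ψ ((0:ℕ) * σ) := by
        exact Finset.sum_range_sub (fun j => Ψ (j * σ)) n
      have hmono' : Ψ ((n : ℝ) * σ) ≤ Ψ (((n : ℕ) + 1 : ℕ) * σ) := by
        apply hmono.monotoneOn (Set.mem_Ici.2 (by positivity))
          (Set.mem_Ici.2 (by positivity))
        push_cast; nlinarith
      rw [htel] at hsum
      norm_num [hΨ0] at hsum
      push_cast at hsum hmono' ⊢
      rw [hq0]
      linarith
  intro i k hk
  set x := Ψ (i * σ) with hx
  have hx0 : 0 ≤ x := hnonneg _ (by positivity)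
  set E := Real.exp (-3 * x ^ 2) with hE
  have hqi : q i = E := hqval i
  have hEpos : 0 < E := Real.exp_pos _
  have hEinv : E * Real.exp (3 * x ^ 2) = 1 := by
    rw [hE, ← Real.exp_add]; norm_num
  have hexp : 1 + 3 * x ^ 2 ≤ Real.exp (3 * x ^ 2) := by
    have := Real.add_one_le_exp (3 * x ^ 2)
    linarith
  have hEx : E * x ≤ 1 / 2 := by
    have h2 : 0 < Real.exp (3 * x ^ 2) := Real.exp_pos _
    nlinarith [sq_nonneg (x - 1/3), mul_pos hEpos h2]
  have hEx2 : E * x ^ 2 ≤ 1 / 2 := by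
    have h2 : 0 < Real.exp (3 * x ^ 2) := Real.exp_pos _
    nlinarith [sq_nonneg x, mul_pos hEpos h2]
  have hE1 : E ≤ 1 := by
    rw [hE, ← Real.exp_zero]
    apply Real.exp_le_exp.2
    nlinarith
  have hPiub : Pi i ≤ x + 2 * σ := by
    rw [hPi i]
    have := sum_ub i
    linarith
  have hPilb : 0 ≤ Pi i := by
    rw [hPi i]
    have : (0:ℝ) ≤ ∑ j ∈ Finset.range i, σ * q j :=
      Finset.sum_nonneg fun j _ => le_of_lt (mul_pos hσ (hqpos j))
    linarith
  rw [hqi]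
  rcases hk with hk | hk
  · subst hk
    rw [pow_one]
    nlinarith
  · subst hk
    have hPsq : Pi i ^ 2 ≤ (x + 2 * σ) ^ 2 := by nlinarith
    nlinarith [mul_pos hσ hσ, mul_nonneg hx0 hσ.le]
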